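/- Let {A_v, B_v, C_v, D_v} and {A_w, B_w, C_w, D_w} be stable dissipative realizations, with A_v of size n_v×n_v, A_w of size n_w×n_w, and common input/output dimension m. Let Ω be an n_v×n_w complex matrix satisfying the Lyapunov equation A_vΩ + ΩA_w* + B_vB_w* = 0, let C_∘ = D_vB_w* + C_vΩ (an m×n_w matrix), and let Q be an n_w×n_w complex matrix satisfying the Lyapunov equation A_wQ + QA_w* + C_∘*C_∘ = 0. Then Q is a positive semidefinite contraction: both Q and I − Q are Hermitian positive semidefinite. -/

import Mathlib

open Matrix
open scoped ComplexOrder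

/-- A quadruple `{A, B, C, D}` is a *stable dissipative realization* if every
eigenvalue of `A` has negative real part, `A + Aᴴ + Cᴴ * C = 0`, `D` is
unitary, and `B = -(Cᴴ * D)`. -/
def IsStableDissipative {n m : ℕ} (A : Matrix (Fin n) (Fin n) ℂ)
    (B : Matrix (Fin n) (Fin m) ℂ) (C : Matrix (Fin m) (Fin n) ℂ)
    (D : Matrix (Fin m) (Fin m) ℂ) : Prop :=
  (∀ z ∈ spectrum ℂ A, z.re < 0) ∧ A + Aᴴ + Cᴴ * C = 0 ∧ Dᴴ * D = 1 ∧ B = -(Cᴴ * D)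

namespace LyapAux

open Filter NormedSpace

private lemma real_decay {c : ℝ} (hc : c < 0) (j : ℕ) :
    Tendsto (fun t : ℝ => t ^ j * Real.exp (t * c)) atTop (nhds 0) := by
  have hb : (0:ℝ) < -c := by linarith
  have h1 : Tendsto (fun t : ℝ => (-c) * t) atTop atTop :=
    Tendsto.const_mul_atTop hb tendsto_id
  have h2 := (Real.tendsto_pow_mul_exp_neg_atTop_nhds_zero j).comp h1
  have h3 := h2.const_mul (((-c) ^ j)⁻¹)
  rw [mul_zero] at h3
  refine h3.congr fun t => ?_
  have hne : (-c) ^ j ≠ 0 := pow_ne_zero _ (by linarith)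
  simp only [Function.comp_apply]
  rw [mul_pow, show -(-c * t) = t * c by ring]
  field_simp

private lemma complex_decay {μ : ℂ} (hμ : μ.re < 0) (j : ℕ) :
    Tendsto (fun t : ℝ => (t : ℂ) ^ j * Complex.exp ((t : ℂ) * μ)) atTop (nhds 0) := by
  rw [tendsto_zero_iff_norm_tendsto_zero]
  apply (real_decay hμ j).congr'
  filter_upwards [eventually_ge_atTop (0:ℝ)] with t ht
  have h1 : ‖(t:ℂ)‖ = t := by
    rw [Complex.norm_real, Real.norm_eq_abs, abs_of_nonneg ht]
  rw [norm_mul, norm_pow, h1, Complex.norm_exp]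
  congr 2
  simp [Complex.mul_re]


variable {N : ℕ}

private lemma rsmul (r : ℝ) (w : Fin N → ℂ) : r • w = (r : ℂ) • w := by
  ext i
  simp [Complex.real_smul]

private noncomputable def mulVecRight {p q : ℕ} (x : Fin q → ℂ) :
    Matrix (Fin p) (Fin q) ℂ →ₗ[ℂ] (Fin p → ℂ) where
  toFun M := M *ᵥ x
  map_add' M P := Matrix.add_mulVec M P x
  map_smul' c M := Matrix.smul_mulVec c M x

private lemma spec_conjTranspose {A : Matrix (Fin N) (Fin N) ℂ}
    (hA : ∀ z ∈ spectrum ℂ A, z.re < 0) : ∀ z ∈ spectrum ℂ Aᴴ, z.re < 0 := by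
  intro z hz
  have h1 : (starRingEnd ℂ) z ∈ spectrum ℂ A := by
    rw [spectrum.mem_iff] at hz ⊢
    intro hu
    apply hz
    have he : algebraMap ℂ (Matrix (Fin N) (Fin N) ℂ) z - Aᴴ
        = (algebraMap ℂ (Matrix (Fin N) (Fin N) ℂ) ((starRingEnd ℂ) z) - A)ᴴ := by
      rw [conjTranspose_sub]
      congr 1
      rw [Algebra.algebraMap_eq_smul_one, Algebra.algebraMap_eq_smul_one,
        Matrix.conjTranspose_smul, conjTranspose_one]
      simp
    rw [he, Matrix.isUnit_iff_isUnit_det, Matrix.det_conjTranspose, isUnit_star,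
      ← Matrix.isUnit_iff_isUnit_det]
    exact hu
  have := hA _ h1
  simpa using this

private lemma exp_mulVec_tendsto (A : Matrix (Fin N) (Fin N) ℂ)
    (hA : ∀ z ∈ spectrum ℂ A, z.re < 0) (x : Fin N → ℂ) :
    Tendsto (fun t : ℝ => exp (t • A) *ᵥ x) atTop (nhds 0) := by
  set f : Module.End ℂ (Fin N → ℂ) := Matrix.toLinAlgEquiv' A with hf
  have hx : x ∈ ⨆ μ, f.maxGenEigenspace μ := by
    rw [Module.End.iSup_maxGenEigenspace_eq_top]; trivial
  refine Submodule.iSup_induction (motive := fun v =>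
      Tendsto (fun t : ℝ => exp (t • A) *ᵥ v) atTop (nhds 0)) _ hx ?_ ?_ ?_
  · intro μ v hv
    by_cases hv0 : v = 0
    · simpa [hv0] using
        (tendsto_const_nhds : Tendsto (fun _ : ℝ => (0 : Fin N → ℂ)) atTop (nhds 0))
    obtain ⟨k, hk⟩ := (Module.End.mem_maxGenEigenspace f μ v).mp hv
    have hμ : μ.re < 0 := by
      apply hA
      rw [← AlgEquiv.spectrum_eq (Matrix.toLinAlgEquiv' (R := ℂ) (n := Fin N)) A]
      apply Module.End.HasEigenvalue.mem_spectrum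
      apply Module.End.hasEigenvalue_of_hasGenEigenvalue (k := k + 1)
      have hvmem : v ∈ f.genEigenspace μ (k + 1) := by
        rw [Module.End.mem_genEigenspace]
        exact ⟨k, by exact_mod_cast le_self_add, hk⟩
      exact Submodule.ne_bot_iff _ |>.mpr ⟨v, hvmem, hv0⟩
    set Nm : Matrix (Fin N) (Fin N) ℂ := A - μ • 1 with hNm
    have hkM : Nm ^ k *ᵥ v = 0 := by
      have h1 : Matrix.toLinAlgEquiv' (Nm ^ k) = (f - μ • 1) ^ k := by
        rw [map_pow, map_sub, _root_.map_smul, _root_.map_one, hf]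
      have h2 : (Matrix.toLinAlgEquiv' (Nm ^ k)) v = 0 := by rw [h1]; exact hk
      rwa [Matrix.toLinAlgEquiv'_apply] at h2
    have key : ∀ t : ℝ, exp (t • A) *ᵥ v =
        ∑ j ∈ Finset.range k,
          (((t : ℂ) ^ j * Complex.exp ((t : ℂ) * μ)) * ((j.factorial : ℂ))⁻¹) • (Nm ^ j *ᵥ v) := by
      intro t
      letI : SeminormedRing (Matrix (Fin N) (Fin N) ℂ) := Matrix.linftyOpSemiNormedRing
      letI : NormedRing (Matrix (Fin N) (Fin N) ℂ) := Matrix.linftyOpNormedRing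
      letI : NormedAlgebra ℝ (Matrix (Fin N) (Fin N) ℂ) := Matrix.linftyOpNormedAlgebra
      letI : NormedAlgebra ℂ (Matrix (Fin N) (Fin N) ℂ) := Matrix.linftyOpNormedAlgebra
      have hsplit : t • A = t • (μ • (1 : Matrix (Fin N) (Fin N) ℂ)) + t • Nm := by
        rw [← smul_add]
        congr 1
        simp [hNm]
      have hcomm : Commute (t • (μ • (1 : Matrix (Fin N) (Fin N) ℂ))) (t • Nm) :=
        (((Commute.one_left Nm).smul_left μ).smul_left t).smul_right t
      rw [hsplit, Matrix.exp_add_of_commute _ _ hcomm]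
      have hsc : exp (t • (μ • (1 : Matrix (Fin N) (Fin N) ℂ)))
          = Complex.exp ((t : ℂ) * μ) • (1 : Matrix (Fin N) (Fin N) ℂ) := by
        have h1 : t • (μ • (1 : Matrix (Fin N) (Fin N) ℂ))
            = algebraMap ℂ (Matrix (Fin N) (Fin N) ℂ) ((t : ℂ) * μ) := by
          rw [← smul_assoc, Algebra.algebraMap_eq_smul_one]
          norm_num [Complex.real_smul]
        erw [h1, ← map_exp (algebraMap ℂ (Matrix (Fin N) (Fin N) ℂ))
            (continuous_algebraMap ℂ _), ← Complex.exp_eq_exp_ℂ,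
          Algebra.algebraMap_eq_smul_one]
      rw [hsc, smul_mul_assoc, one_mul, Matrix.smul_mulVec]
      have hexpN : exp (t • Nm) *ᵥ v
          = ∑ j ∈ Finset.range k, (((t : ℂ) ^ j) * ((j.factorial : ℂ))⁻¹) • (Nm ^ j *ᵥ v) := by
        set ψ : Matrix (Fin N) (Fin N) ℂ →L[ℝ] (Fin N → ℂ) :=
          LinearMap.toContinuousLinearMap ((mulVecRight v).restrictScalars ℝ) with hψ
        have hψap : ∀ M : Matrix (Fin N) (Fin N) ℂ, ψ M = M *ᵥ v := fun M => rfl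
        have hsum : Summable (fun j : ℕ => ((j.factorial : ℝ))⁻¹ • (t • Nm) ^ j) :=
          expSeries_summable' (𝕂 := ℝ) (t • Nm)
        have h1 : exp (t • Nm) *ᵥ v = ∑' j : ℕ, ψ (((j.factorial : ℝ))⁻¹ • (t • Nm) ^ j) := by
          rw [exp_eq_tsum ℝ, ← hψap]
          exact ψ.map_tsum hsum
        have h2 : ∀ j : ℕ, ψ (((j.factorial : ℝ))⁻¹ • (t • Nm) ^ j)
            = (((t : ℂ) ^ j) * ((j.factorial : ℂ))⁻¹) • (Nm ^ j *ᵥ v) := by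
          intro j
          rw [_root_.map_smul, hψap, smul_pow, Matrix.smul_mulVec, rsmul, rsmul, smul_smul]
          congr 1
          push_cast
          ring
        rw [h1, tsum_congr h2, tsum_eq_sum (s := Finset.range k) ?_]
        intro j hj
        have hjk : k ≤ j := by simpa using Finset.mem_range.not.mp hj
        have hz : Nm ^ j *ᵥ v = 0 := by
          have hp : Nm ^ j = Nm ^ (j - k) * Nm ^ k := by
            rw [← pow_add]
            congr 1
            omega
          rw [hp, ← Matrix.mulVec_mulVec, hkM, Matrix.mulVec_zero]
        simp [hz]
      rw [hexpN, Finset.smul_sum]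
      refine Finset.sum_congr rfl fun j _ => ?_
      rw [smul_smul]
      ring_nf
    apply Tendsto.congr (fun t => (key t).symm)
    have h0 : (0 : Fin N → ℂ) = ∑ _j ∈ Finset.range k, (0 : Fin N → ℂ) := by simp
    rw [h0]
    refine tendsto_finset_sum _ fun j _ => ?_
    have h1 := (complex_decay hμ j).mul_const ((j.factorial : ℂ))⁻¹
    rw [zero_mul] at h1
    have h2 := h1.smul_const (Nm ^ j *ᵥ v)
    rwa [zero_smul] at h2
  · simpa using (tendsto_const_nhds : Tendsto (fun _ : ℝ => (0 : Fin N → ℂ)) atTop (nhds 0))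
  · intro a b ha hb
    have := ha.add hb
    rw [add_zero] at this
    apply this.congr
    intro t
    rw [Matrix.mulVec_add]

private lemma exp_tendsto (A : Matrix (Fin N) (Fin N) ℂ)
    (hA : ∀ z ∈ spectrum ℂ A, z.re < 0) :
    Tendsto (fun t : ℝ => exp (t • A)) atTop (nhds 0) := by
  refine tendsto_pi_nhds.mpr ?_
  intro i
  rw [tendsto_pi_nhds]
  intro j
  have h := exp_mulVec_tendsto A hA (Pi.single j 1)
  have h2 := ((continuous_apply i).tendsto _).comp h
  simp only [Function.comp_def] at h2
  simp only [Matrix.mulVec_single, mul_one] at h2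
  simpa using h2


variable {N : ℕ}




private noncomputable def entryForm {p : ℕ} (x z : Fin p → ℂ) :
    Matrix (Fin p) (Fin p) ℂ →ₗ[ℂ] ℂ where
  toFun M := x ⬝ᵥ (M *ᵥ z)
  map_add' M P := by simp [Matrix.add_mulVec, dotProduct_add]
  map_smul' c M := by simp [Matrix.smul_mulVec]

private lemma conjT_real_smul (t : ℝ) (M : Matrix (Fin N) (Fin N) ℂ) :
    (t • M)ᴴ = t • Mᴴ := by
  ext i j
  simp [Matrix.conjTranspose_apply]

private lemma hasDerivAt_form (A X : Matrix (Fin N) (Fin N) ℂ) (x z : Fin N → ℂ) (t : ℝ) :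
    HasDerivAt (fun s : ℝ => x ⬝ᵥ ((exp (s • A) * X * exp (s • Aᴴ)) *ᵥ z))
      (x ⬝ᵥ ((exp (t • A) * (A * X + X * Aᴴ) * exp (t • Aᴴ)) *ᵥ z)) t := by
  letI : SeminormedRing (Matrix (Fin N) (Fin N) ℂ) := Matrix.linftyOpSemiNormedRing
  letI : NormedRing (Matrix (Fin N) (Fin N) ℂ) := Matrix.linftyOpNormedRing
  letI : NormedAlgebra ℝ (Matrix (Fin N) (Fin N) ℂ) := Matrix.linftyOpNormedAlgebra
  have hE : HasDerivAt (fun s : ℝ => exp (s • A)) (exp (t • A) * A) t :=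
    hasDerivAt_exp_smul_const A t
  have hG : HasDerivAt (fun s : ℝ => exp (s • Aᴴ)) (exp (t • Aᴴ) * Aᴴ) t :=
    hasDerivAt_exp_smul_const Aᴴ t
  have hF := (hE.mul_const X).mul hG
  set Φ : Matrix (Fin N) (Fin N) ℂ →L[ℝ] ℂ :=
    LinearMap.toContinuousLinearMap ((entryForm x z).restrictScalars ℝ) with hΦ
  have hΦap : ∀ M : Matrix (Fin N) (Fin N) ℂ, Φ M = x ⬝ᵥ (M *ᵥ z) := fun M => rfl
  have hcomp := Φ.hasFDerivAt.comp_hasDerivAt t hF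
  have comm : Aᴴ * exp (t • Aᴴ) = exp (t • Aᴴ) * Aᴴ :=
    (((Commute.refl Aᴴ).smul_right t).exp_right).eq
  have hid : exp (t • A) * (A * X + X * Aᴴ) * exp (t • Aᴴ)
      = exp (t • A) * A * X * exp (t • Aᴴ) + exp (t • A) * X * (exp (t • Aᴴ) * Aᴴ) := by
    rw [← comm]
    noncomm_ring
  simp only [Function.comp_def, hΦap] at hcomp
  rw [hid]
  exact hcomp.congr_deriv rfl

private lemma tendsto_form_zero (A Y : Matrix (Fin N) (Fin N) ℂ)
    (hA : ∀ z ∈ spectrum ℂ A, z.re < 0) (x z : Fin N → ℂ) :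
    Tendsto (fun t : ℝ => x ⬝ᵥ ((exp (t • A) * Y * exp (t • Aᴴ)) *ᵥ z)) atTop (nhds 0) := by
  have h1 := exp_tendsto A hA
  have h2 := exp_tendsto Aᴴ (spec_conjTranspose hA)
  have hc : Continuous (fun p : Matrix (Fin N) (Fin N) ℂ × Matrix (Fin N) (Fin N) ℂ =>
      p.1 * Y * p.2) :=
    (continuous_fst.matrix_mul continuous_const).matrix_mul continuous_snd
  have h3 := (hc.tendsto ((0 : Matrix (Fin N) (Fin N) ℂ), (0 : Matrix (Fin N) (Fin N) ℂ))).comp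
    (h1.prodMk_nhds h2)
  simp only [Function.comp_def, Matrix.zero_mul, Matrix.mul_zero] at h3
  have φcont : Continuous (entryForm x z) :=
    LinearMap.continuous_of_finiteDimensional (entryForm x z)
  have h4 := (φcont.tendsto 0).comp h3
  simp only [Function.comp_def] at h4
  have : (entryForm x z) (0 : Matrix (Fin N) (Fin N) ℂ) = 0 := map_zero _
  rw [this] at h4
  exact h4

private lemma lyap_unique (A : Matrix (Fin N) (Fin N) ℂ)
    (hA : ∀ z ∈ spectrum ℂ A, z.re < 0) (Y : Matrix (Fin N) (Fin N) ℂ)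
    (hY : A * Y + Y * Aᴴ = 0) : Y = 0 := by
  have key : ∀ x z : Fin N → ℂ, x ⬝ᵥ (Y *ᵥ z) = 0 := by
    intro x z
    set h : ℝ → ℂ := fun t => x ⬝ᵥ ((exp (t • A) * Y * exp (t • Aᴴ)) *ᵥ z) with hh
    have hd : ∀ t, HasDerivAt h 0 t := by
      intro t
      have H := hasDerivAt_form A Y x z t
      rw [hY] at H
      simpa using H
    have hconst : ∀ t, h t = h 0 := fun t =>
      is_const_of_deriv_eq_zero (fun s => (hd s).differentiableAt)
        (fun s => (hd s).deriv) t 0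
    have hlim : Tendsto h atTop (nhds 0) := tendsto_form_zero A Y hA x z
    have h0 : h 0 = 0 := by
      have h5 : Tendsto (fun _ : ℝ => h 0) atTop (nhds 0) :=
        hlim.congr fun t => hconst t
      exact tendsto_nhds_unique tendsto_const_nhds h5
    rw [hh] at h0
    simpa using h0
  ext i j
  have := key (Pi.single i 1) (Pi.single j 1)
  simpa [Matrix.mulVec_single, single_dotProduct] using this

private lemma lyap_psd (A : Matrix (Fin N) (Fin N) ℂ)
    (hA : ∀ z ∈ spectrum ℂ A, z.re < 0) (X S : Matrix (Fin N) (Fin N) ℂ)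
    (hS : S.PosSemidef) (hX : A * X + X * Aᴴ + S = 0) : X.PosSemidef := by
  have herm : X.IsHermitian := by
    have hXc := congrArg conjTranspose hX
    simp only [conjTranspose_add, conjTranspose_mul, conjTranspose_conjTranspose,
      conjTranspose_zero, hS.1.eq] at hXc
    have h1 : A * (X - Xᴴ) + (X - Xᴴ) * Aᴴ = 0 := by
      have h2 : (A * X + X * Aᴴ + S) - (Xᴴ * Aᴴ + A * Xᴴ + S) = 0 := by
        rw [hX, hXc, sub_zero]
      calc A * (X - Xᴴ) + (X - Xᴴ) * Aᴴ
          = (A * X + X * Aᴴ + S) - (Xᴴ * Aᴴ + A * Xᴴ + S) := by noncomm_ring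
        _ = 0 := h2
    have h2 := lyap_unique A hA _ h1
    exact (sub_eq_zero.mp h2).symm
  refine Matrix.PosSemidef.of_dotProduct_mulVec_nonneg herm fun v => ?_
  have hXS : A * X + X * Aᴴ = -S := eq_neg_of_add_eq_zero_left hX
  set h : ℝ → ℂ := fun t => star v ⬝ᵥ ((exp (t • A) * X * exp (t • Aᴴ)) *ᵥ v) with hh
  set y : ℝ → (Fin N → ℂ) := fun t => exp (t • Aᴴ) *ᵥ v with hy
  have hGH : ∀ t : ℝ, (exp (t • Aᴴ))ᴴ = exp (t • A) := by
    intro t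
    rw [← Matrix.exp_conjTranspose, conjT_real_smul, conjTranspose_conjTranspose]
  have hd : ∀ t, HasDerivAt h (-(star (y t) ⬝ᵥ (S *ᵥ y t))) t := by
    intro t
    have H := hasDerivAt_form A X (star v) v t
    rw [hXS] at H
    have hder : star v ⬝ᵥ ((exp (t • A) * -S * exp (t • Aᴴ)) *ᵥ v)
        = -(star (y t) ⬝ᵥ (S *ᵥ y t)) := by
      rw [hy, Matrix.star_mulVec, hGH]
      rw [Matrix.mul_neg, Matrix.neg_mul, Matrix.neg_mulVec, dotProduct_neg]
      rw [Matrix.mul_assoc, ← Matrix.mulVec_mulVec, ← Matrix.mulVec_mulVec]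
      rw [Matrix.dotProduct_mulVec (star v) (exp (t • A))]
    rw [hder] at H
    exact H
  -- real part antitone, imaginary part constant
  have hre : ∀ t, HasDerivAt (fun s => (h s).re) (-(star (y t) ⬝ᵥ (S *ᵥ y t))).re t := by
    intro t
    exact (Complex.reCLM.hasFDerivAt.comp_hasDerivAt t (hd t))
  have him : ∀ t, HasDerivAt (fun s => (h s).im) (-(star (y t) ⬝ᵥ (S *ᵥ y t))).im t := by
    intro t
    exact (Complex.imCLM.hasFDerivAt.comp_hasDerivAt t (hd t))
  have hSpos : ∀ t, (0 : ℂ) ≤ star (y t) ⬝ᵥ (S *ᵥ y t) := fun t => hS.dotProduct_mulVec_nonneg (y t)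
  have hlim : Tendsto h atTop (nhds 0) := tendsto_form_zero A X hA (star v) v
  have hrelim : Tendsto (fun t => (h t).re) atTop (nhds 0) := by
    have := (Complex.continuous_re.tendsto 0).comp hlim
    simpa [Function.comp_def] using this
  have himlim : Tendsto (fun t => (h t).im) atTop (nhds 0) := by
    have := (Complex.continuous_im.tendsto 0).comp hlim
    simpa [Function.comp_def] using this
  have hranti : Antitone (fun t => (h t).re) := by
    apply antitone_of_deriv_nonpos
    · exact fun t => ((hre t).differentiableAt)
    · intro t
      rw [(hre t).deriv]
      have := hSpos t
      rw [Complex.le_def] at this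
      simp only [Complex.neg_re]
      simpa using this.1
  have hr0 : 0 ≤ (h 0).re := by
    apply le_of_tendsto hrelim
    filter_upwards [eventually_ge_atTop (0 : ℝ)] with t ht
    exact hranti ht
  have hi0 : (h 0).im = 0 := by
    have hiconst : ∀ t, (h t).im = (h 0).im := fun t =>
      is_const_of_deriv_eq_zero (fun s => (him s).differentiableAt)
        (fun s => by
          rw [(him s).deriv]
          have := hSpos s
          rw [Complex.le_def] at this
          simp only [Complex.neg_im]
          simpa using (this.2).symm) t 0
    have h5 : Tendsto (fun _ : ℝ => (h 0).im) atTop (nhds 0) :=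
      himlim.congr fun t => hiconst t
    exact tendsto_nhds_unique tendsto_const_nhds h5
  have hh0 : h 0 = star v ⬝ᵥ (X *ᵥ v) := by
    rw [hh]
    simp
  rw [Complex.le_def, ← hh0]
  refine ⟨by simpa using hr0, by simpa using hi0.symm⟩


end LyapAux

theorem stmt_0 {nv nw m : ℕ}
    (Av : Matrix (Fin nv) (Fin nv) ℂ) (Bv : Matrix (Fin nv) (Fin m) ℂ)
    (Cv : Matrix (Fin m) (Fin nv) ℂ) (Dv : Matrix (Fin m) (Fin m) ℂ)
    (Aw : Matrix (Fin nw) (Fin nw) ℂ) (Bw : Matrix (Fin nw) (Fin m) ℂ)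
    (Cw : Matrix (Fin m) (Fin nw) ℂ) (Dw : Matrix (Fin m) (Fin m) ℂ)
    (hv : IsStableDissipative Av Bv Cv Dv)
    (hw : IsStableDissipative Aw Bw Cw Dw)
    (Ω : Matrix (Fin nv) (Fin nw) ℂ)
    (hΩ : Av * Ω + Ω * Awᴴ + Bv * Bwᴴ = 0)
    (Co : Matrix (Fin m) (Fin nw) ℂ)
    (hCo : Co = Dv * Bwᴴ + Cv * Ω)
    (Q : Matrix (Fin nw) (Fin nw) ℂ)
    (hQ : Aw * Q + Q * Awᴴ + Coᴴ * Co = 0) :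
    Q.PosSemidef ∧ (1 - Q).PosSemidef := by
  obtain ⟨hv1, hv2, hv3, hv4⟩ := hv
  obtain ⟨hw1, hw2, hw3, hw4⟩ := hw
  have hQpsd : Q.PosSemidef :=
    LyapAux.lyap_psd Aw hw1 Q (Coᴴ * Co) (Matrix.posSemidef_conjTranspose_mul_self Co) hQ
  have hw3' : Dw * Dwᴴ = 1 := mul_eq_one_comm.mp hw3
  -- cancellation helpers
  have cancelDv : ∀ {p : ℕ} (Z : Matrix (Fin m) (Fin p) ℂ), Dvᴴ * (Dv * Z) = Z := by
    intro p Z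
    rw [← Matrix.mul_assoc, hv3, Matrix.one_mul]
  have cancelDw : ∀ {p : ℕ} (Z : Matrix (Fin m) (Fin p) ℂ), Dw * (Dwᴴ * Z) = Z := by
    intro p Z
    rw [← Matrix.mul_assoc, hw3', Matrix.one_mul]
  -- the residual identity
  have hR : Coᴴ * Co - Cwᴴ * Cw + Bw * Bvᴴ * Ω + Ωᴴ * (Bv * Bwᴴ) - Ωᴴ * (Cvᴴ * Cv) * Ω = 0 := by
    subst hCo
    rw [hv4, hw4]
    simp only [conjTranspose_add, conjTranspose_neg, conjTranspose_mul,
      conjTranspose_conjTranspose, Matrix.add_mul, Matrix.mul_add, Matrix.neg_mul,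
      Matrix.mul_neg, neg_neg, Matrix.mul_assoc, cancelDv, cancelDw]
    abel
  have e2' : Ωᴴ * Avᴴ + Aw * Ωᴴ + Bw * Bvᴴ = 0 := by
    have h := congrArg conjTranspose hΩ
    simpa only [conjTranspose_add, conjTranspose_mul, conjTranspose_conjTranspose,
      conjTranspose_zero] using h
  have key : Aw * (1 - Ωᴴ * Ω) + (1 - Ωᴴ * Ω) * Awᴴ + Coᴴ * Co = 0 := by
    have expand : Aw * (1 - Ωᴴ * Ω) + (1 - Ωᴴ * Ω) * Awᴴ + Coᴴ * Co
        = (Aw + Awᴴ + Cwᴴ * Cw) - (Ωᴴ * Avᴴ + Aw * Ωᴴ + Bw * Bvᴴ) * Ω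
          - Ωᴴ * (Av * Ω + Ω * Awᴴ + Bv * Bwᴴ)
          + Ωᴴ * (Av + Avᴴ + Cvᴴ * Cv) * Ω
          + (Coᴴ * Co - Cwᴴ * Cw + Bw * Bvᴴ * Ω + Ωᴴ * (Bv * Bwᴴ) - Ωᴴ * (Cvᴴ * Cv) * Ω) := by
      simp only [Matrix.add_mul, Matrix.mul_add, Matrix.sub_mul, Matrix.mul_sub,
        Matrix.mul_one, Matrix.one_mul, Matrix.mul_assoc]
      abel
    rw [expand, hw2, hv2, hΩ, e2', hR]
    simp
  have hYeq : Q - (1 - Ωᴴ * Ω) = 0 := by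
    apply LyapAux.lyap_unique Aw hw1
    have expand2 : Aw * (Q - (1 - Ωᴴ * Ω)) + (Q - (1 - Ωᴴ * Ω)) * Awᴴ
        = (Aw * Q + Q * Awᴴ + Coᴴ * Co)
          - (Aw * (1 - Ωᴴ * Ω) + (1 - Ωᴴ * Ω) * Awᴴ + Coᴴ * Co) := by
      simp only [Matrix.add_mul, Matrix.mul_add, Matrix.sub_mul, Matrix.mul_sub,
        Matrix.mul_one, Matrix.one_mul, Matrix.mul_assoc]
      abel
    rw [expand2, hQ, key, sub_zero]
  have hQeq : (1 : Matrix (Fin nw) (Fin nw) ℂ) - Q = Ωᴴ * Ω := by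
    have := sub_eq_zero.mp hYeq
    rw [this]
    noncomm_ring
  exact ⟨hQpsd, hQeq ▸ Matrix.posSemidef_conjTranspose_mul_self Ω⟩
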